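/- Let 0 < α < 1 and let U_{(1)} ≤ ... ≤ U_{(m)} be the order statistics of m i.i.d. Uniform([0,1]) variables. For any k ≤ m, with probability at least 1 - Õ(1/k + 1/k^{(1-α)/α}) (polylogarithmic factors in k allowed), it holds that ∑_{i=1}^{k} U_{(i)}^{-α} ≤ (2·3^α/(1-α)) · m^α · k^{1-α}. -/

import Mathlib

open MeasureTheory ProbabilityTheory Real Classical

lemma sum_rpow_neg_le (α : ℝ) (hα0 : 0 < α) (hα1 : α < 1) (k : ℕ) :
    ∑ n ∈ Finset.range k, ((n:ℝ)+1) ^ (-α) ≤ (k:ℝ) ^ (1-α) / (1-α) := by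
  have h1α : (0:ℝ) < 1 - α := by linarith
  induction k with
  | zero => simp [Real.zero_rpow (ne_of_gt h1α)]
  | succ k ih =>
    rw [Finset.sum_range_succ]
    have hk1 : (0:ℝ) < (k:ℝ)+1 := by positivity
    have key : (k:ℝ)^(1-α) + (1-α) * ((k:ℝ)+1)^(-α) ≤ ((k:ℝ)+1)^(1-α) := by
      have hsplit : ((k:ℝ)+1)^(1-α) = ((k:ℝ)+1) * ((k:ℝ)+1)^(-α) := by
        rw [show (1:ℝ)-α = 1 + (-α) by ring, Real.rpow_add hk1, Real.rpow_one]
      rcases Nat.eq_zero_or_pos k with h | h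
      · subst h
        norm_num [Real.zero_rpow (ne_of_gt h1α), Real.one_rpow]
        linarith
      · have hk : (0:ℝ) < k := by exact_mod_cast h
        have hsge : (-1:ℝ) ≤ 1/(k:ℝ) := le_trans (by norm_num : (-1:ℝ) ≤ 0) (by positivity)
        have hb : (1 + 1/(k:ℝ))^α ≤ 1 + α * (1/k) :=
          rpow_one_add_le_one_add_mul_self hsge hα0.le hα1.le
        have hmain : (k:ℝ)^(1-α) * ((k:ℝ)+1)^α ≤ (k:ℝ) + α := by
          have h1 : ((k:ℝ)+1) = k * (1 + 1/k) := by field_simp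
          have h2 : ((k:ℝ)+1)^α = (k:ℝ)^α * (1+1/k)^α := by
            rw [h1, Real.mul_rpow hk.le (by positivity)]
          calc (k:ℝ)^(1-α) * ((k:ℝ)+1)^α = (k:ℝ)^(1-α) * (k:ℝ)^α * (1+1/k)^α := by
                rw [h2]; ring
            _ = (k:ℝ) * (1+1/k)^α := by
                rw [← Real.rpow_add hk]; norm_num
            _ ≤ (k:ℝ) * (1 + α * (1/k)) := by
                apply mul_le_mul_of_nonneg_left hb hk.le
            _ = (k:ℝ) + α := by field_simp
        have hkpow : (k:ℝ)^(1-α) = (k:ℝ)^(1-α) * ((k:ℝ)+1)^α * ((k:ℝ)+1)^(-α) := by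
          rw [mul_assoc, ← Real.rpow_add hk1]
          norm_num
        rw [hkpow, hsplit]
        have hpos : (0:ℝ) < ((k:ℝ)+1)^(-α) := Real.rpow_pos_of_pos hk1 _
        nlinarith [hmain, hpos]
    have hcast : ((k+1 : ℕ):ℝ) = (k:ℝ)+1 := by push_cast; ring
    rw [hcast]
    have h2 := (div_le_div_iff_of_pos_right h1α).mpr key
    rw [add_div] at h2
    have h3 : (1-α) * ((k:ℝ)+1)^(-α) / (1-α) = ((k:ℝ)+1)^(-α) := by
      field_simp
    rw [h3] at h2
    linarith

lemma pow_self_le_three_pow_mul_factorial (n : ℕ) :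
    (n : ℝ) ^ n ≤ 3 ^ n * n.factorial := by
  induction n with
  | zero => norm_num
  | succ n ih =>
    have h3 : ((n:ℝ)+1) ^ n ≤ 3 * (n:ℝ) ^ n := by
      rcases Nat.eq_zero_or_pos n with h | h
      · subst h; norm_num
      · have hn : (0:ℝ) < n := by exact_mod_cast h
        have h1 : ((n:ℝ)+1) = n * (1 + 1/n) := by field_simp
        have h2 : (1 + 1/(n:ℝ)) ^ n ≤ 3 := by
          have := Real.add_one_le_exp (1/(n:ℝ))
          calc (1 + 1/(n:ℝ)) ^ n ≤ (Real.exp (1/n)) ^ n := by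
                apply pow_le_pow_left₀ (by positivity) (by linarith)
            _ = Real.exp (n * (1/n)) := by rw [← Real.exp_nat_mul]
            _ = Real.exp 1 := by rw [mul_one_div, div_self hn.ne']
            _ ≤ 3 := by linarith [Real.exp_one_lt_d9]
        calc ((n:ℝ)+1) ^ n = (n:ℝ)^n * (1+1/n)^n := by rw [h1, mul_pow]
          _ ≤ (n:ℝ)^n * 3 := by
              apply mul_le_mul_of_nonneg_left h2 (by positivity)
          _ = 3 * (n:ℝ)^n := by ring
    have hfact : ((n+1).factorial : ℝ) = ((n:ℝ)+1) * n.factorial := by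
      rw [Nat.factorial_succ]; push_cast; ring
    have hcast : ((n+1 : ℕ) : ℝ) = (n:ℝ) + 1 := by push_cast; ring
    rw [hcast]
    calc ((n:ℝ)+1) ^ (n+1) = ((n:ℝ)+1)^n * ((n:ℝ)+1) := by ring
      _ ≤ 3 * (n:ℝ)^n * ((n:ℝ)+1) := by
          apply mul_le_mul_of_nonneg_right h3 (by positivity)
      _ ≤ 3 * (3^n * n.factorial) * ((n:ℝ)+1) := by
          have hn1 : (0:ℝ) ≤ (n:ℝ)+1 := by positivity
          apply mul_le_mul_of_nonneg_right _ hn1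
          apply mul_le_mul_of_nonneg_left ih (by norm_num)
      _ = 3^(n+1) * ((n+1).factorial) := by rw [hfact]; ring

-- key tail bound for choose(m,n)*(n/(6m))^n ≤ (1/2)^n
lemma choose_mul_pow_le (m n : ℕ) (hm : 1 ≤ m) :
    (m.choose n : ℝ) * ((n:ℝ)/(6*m)) ^ n ≤ (1/2) ^ n := by
  have hm0 : (0:ℝ) < m := by exact_mod_cast hm
  have hfac : (0:ℝ) < n.factorial := by exact_mod_cast n.factorial_pos
  have h1 : (m.choose n : ℝ) ≤ (m:ℝ)^n / n.factorial := by
    have := Nat.choose_le_pow_div (α := ℝ) n m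
    simpa using this
  have h2 : ((n:ℝ)/(6*m)) ^ n = (n:ℝ)^n / (6*m)^n := by rw [div_pow]
  calc (m.choose n : ℝ) * ((n:ℝ)/(6*m)) ^ n
      ≤ ((m:ℝ)^n / n.factorial) * ((n:ℝ)^n / (6*m)^n) := by
        rw [h2]; apply mul_le_mul_of_nonneg_right h1 (by positivity)
    _ = (n:ℝ)^n / (n.factorial * 6^n) := by
        rw [mul_pow]; field_simp
    _ ≤ (3^n * n.factorial) / (n.factorial * 6^n) := by
        apply div_le_div_of_nonneg_right (pow_self_le_three_pow_mul_factorial n) (by positivity)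
    _ = (1/2)^n := by
        rw [div_pow, one_pow]
        rw [eq_div_iff (by positivity)]
        field_simp
        have h6 : (3:ℝ)^n * 2^n = 6^n := by rw [← mul_pow]; norm_num
        exact h6

lemma uniform_tail_bound {Ω : Type} [MeasurableSpace Ω] (P : Measure Ω)
    [IsProbabilityMeasure P] {m : ℕ} (U : Fin m → Ω → ℝ)
    (hind : iIndepFun U P)
    (hmap : ∀ i, Measure.map (U i) P = volume.restrict (Set.Icc (0:ℝ) 1))
    (t : ℝ) (ht : 0 ≤ t) (n : ℕ) :
    P {ω | ∃ S : Finset (Fin m), S.card = n ∧ ∀ j ∈ S, U j ω ≤ t}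
      ≤ (m.choose n) * ENNReal.ofReal t ^ n := by
  have hAE : ∀ j, AEMeasurable (U j) P := by
    intro j
    by_contra h
    have h0 := Measure.map_of_not_aemeasurable h
    rw [hmap j] at h0
    have : (volume.restrict (Set.Icc (0:ℝ) 1)) Set.univ = 1 := by
      rw [Measure.restrict_apply_univ]
      simp [Real.volume_Icc]
    rw [h0] at this
    simp at this
  have hsingle : ∀ j : Fin m, P (U j ⁻¹' Set.Iic t) ≤ ENNReal.ofReal t := by
    intro j
    have h1 : P (U j ⁻¹' Set.Iic t) = (Measure.map (U j) P) (Set.Iic t) := by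
      rw [Measure.map_apply_of_aemeasurable (hAE j) measurableSet_Iic]
    rw [h1, hmap j, Measure.restrict_apply measurableSet_Iic]
    calc volume (Set.Iic t ∩ Set.Icc 0 1) ≤ volume (Set.Icc (0:ℝ) t) := by
          apply measure_mono
          rintro x ⟨hx1, hx2, _⟩
          exact ⟨hx2, hx1⟩
      _ = ENNReal.ofReal t := by rw [Real.volume_Icc]; norm_num
  have hsub : {ω | ∃ S : Finset (Fin m), S.card = n ∧ ∀ j ∈ S, U j ω ≤ t}
      ⊆ ⋃ S ∈ Finset.powersetCard n (Finset.univ : Finset (Fin m)),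
          ⋂ j ∈ S, U j ⁻¹' Set.Iic t := by
    rintro ω ⟨S, hcard, hall⟩
    apply Set.mem_biUnion (Finset.mem_powersetCard.mpr ⟨Finset.subset_univ S, hcard⟩)
    exact Set.mem_biInter fun j hj => hall j hj
  calc P _ ≤ P (⋃ S ∈ Finset.powersetCard n (Finset.univ : Finset (Fin m)),
          ⋂ j ∈ S, U j ⁻¹' Set.Iic t) := measure_mono hsub
    _ ≤ ∑ S ∈ Finset.powersetCard n (Finset.univ : Finset (Fin m)),
          P (⋂ j ∈ S, U j ⁻¹' Set.Iic t) := measure_biUnion_finset_le _ _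
    _ ≤ ∑ S ∈ Finset.powersetCard n (Finset.univ : Finset (Fin m)),
          ENNReal.ofReal t ^ n := by
        apply Finset.sum_le_sum
        intro S hS
        have hcard := (Finset.mem_powersetCard.mp hS).2
        have heq : P (⋂ j ∈ S, U j ⁻¹' Set.Iic t) = ∏ j ∈ S, P (U j ⁻¹' Set.Iic t) := by
          apply hind.meas_biInter
          intro j _
          exact ⟨Set.Iic t, measurableSet_Iic, rfl⟩
        rw [heq, ← hcard]
        calc ∏ j ∈ S, P (U j ⁻¹' Set.Iic t) ≤ ∏ _j ∈ S, ENNReal.ofReal t :=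
              Finset.prod_le_prod' fun j _ => hsingle j
          _ = ENNReal.ofReal t ^ S.card := Finset.prod_const _
    _ = (m.choose n) * ENNReal.ofReal t ^ n := by
        rw [Finset.sum_const, Finset.card_powersetCard, Finset.card_univ, Fintype.card_fin,
          nsmul_eq_mul]
lemma aux_gc {Ω : Type} (m k i0 : ℕ) (hk : 1 ≤ k) (hkm : k ≤ m) (δ : ℝ)
    (U : Fin m → Ω → ℝ) (Uord : Ω → Fin m → ℝ)
    (hmono : ∀ ω, Monotone (Uord ω))
    (hperm : ∀ ω, ∃ σ : Equiv.Perm (Fin m), ∀ i, Uord ω i = U (σ i) ω) :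
    {ω : Ω | ∀ i : Fin m, (i:ℕ) < k →
        (if (i:ℕ) < i0 then δ else ((i:ℕ)+1:ℝ)/(6*m)) ≤ Uord ω i}ᶜ
      ⊆ {ω | ∃ S : Finset (Fin m), S.card = 1 ∧ ∀ j ∈ S, U j ω ≤ δ}
        ∪ ⋃ n ∈ Finset.Ico i0 k,
            {ω | ∃ S : Finset (Fin m), S.card = n+1 ∧ ∀ j ∈ S, U j ω ≤ ((n:ℝ)+1)/(6*m)} := by
  intro ω hω
  simp only [Set.mem_compl_iff, Set.mem_setOf_eq, not_forall] at hω
  obtain ⟨i, hik, hlt⟩ := hω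
  push_neg at hlt
  obtain ⟨σ, hσ⟩ := hperm ω
  by_cases hcase : (i:ℕ) < i0
  · left
    rw [if_pos hcase] at hlt
    refine ⟨{σ ⟨0, i.pos⟩}, Finset.card_singleton _, ?_⟩
    intro j hj
    rw [Finset.mem_singleton] at hj
    subst hj
    rw [← hσ]
    calc Uord ω ⟨0, i.pos⟩ ≤ Uord ω i := hmono ω (by simp [Fin.le_def])
      _ ≤ δ := hlt.le
  · right
    rw [if_neg hcase] at hlt
    push_neg at hcase
    apply Set.mem_biUnion (Finset.mem_Ico.mpr ⟨hcase, hik⟩)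
    refine ⟨(Finset.Iic i).map (Equiv.toEmbedding σ), ?_, ?_⟩
    · rw [Finset.card_map, Fin.card_Iic]
    · intro j hj
      rw [Finset.mem_map] at hj
      obtain ⟨j', hj', rfl⟩ := hj
      rw [Finset.mem_Iic] at hj'
      show U (σ j') ω ≤ _
      rw [← hσ]
      calc Uord ω j' ≤ Uord ω i := hmono ω hj'
        _ ≤ _ := hlt.le


lemma aux_gsub {Ω : Type} (α : ℝ) (hα0 : 0 < α) (hα1 : α < 1)
    (m k i0 : ℕ) (hk : 1 ≤ k) (hkm : k ≤ m) (hi0pos : 0 < i0) (δ A : ℝ)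
    (hA_def : A = (2 * 3^α - 6^α) / (1-α)) (hδpos : 0 < δ)
    (hδpow : δ^(-α) = (A/(i0:ℝ)) * (m:ℝ)^α * (k:ℝ)^(1-α))
    (Uord : Ω → Fin m → ℝ) (ω : Ω)
    (hG : ∀ i : Fin m, (i:ℕ) < k →
        (if (i:ℕ) < i0 then δ else ((i:ℕ)+1:ℝ)/(6*m)) ≤ Uord ω i) :
    ∑ i ∈ Finset.univ.filter (fun i : Fin m => (i : ℕ) < k), (Uord ω i) ^ (-α)
      ≤ 2 * 3 ^ α / (1 - α) * (m : ℝ) ^ α * (k : ℝ) ^ (1 - α) := by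
  have h1α : (0:ℝ) < 1 - α := by linarith
  have hmR : (0:ℝ) < m := by exact_mod_cast lt_of_lt_of_le hk hkm
  have hkR : (0:ℝ) < k := by exact_mod_cast hk
  have hi0R : (0:ℝ) < i0 := by exact_mod_cast hi0pos
  set T : Fin m → ℝ := fun i => if (i:ℕ) < i0 then δ else ((i:ℕ)+1:ℝ)/(6*m) with hT_def
  have hTpos : ∀ i : Fin m, 0 < T i := by
    intro i; rw [hT_def]; dsimp only; split
    · exact hδpos
    · positivity
  have step1 : ∑ i ∈ Finset.univ.filter (fun i : Fin m => (i : ℕ) < k), (Uord ω i) ^ (-α)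
      ≤ ∑ i ∈ Finset.univ.filter (fun i : Fin m => (i : ℕ) < k), (T i) ^ (-α) := by
    apply Finset.sum_le_sum
    intro i hi
    rw [Finset.mem_filter] at hi
    exact Real.rpow_le_rpow_of_nonpos (hTpos i) (hG i hi.2) (by linarith)
  have hsplit := Finset.sum_filter_add_sum_filter_not
    (Finset.univ.filter (fun i : Fin m => (i : ℕ) < k))
    (fun i : Fin m => (i:ℕ) < i0) (fun i => (T i) ^ (-α))
  -- first part
  have hfirst : ∑ i ∈ (Finset.univ.filter (fun i : Fin m => (i : ℕ) < k)).filter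
        (fun i : Fin m => (i:ℕ) < i0), (T i) ^ (-α)
      ≤ A * (m:ℝ)^α * (k:ℝ)^(1-α) := by
    have hcard : ((Finset.univ.filter (fun i : Fin m => (i : ℕ) < k)).filter
        (fun i : Fin m => (i:ℕ) < i0)).card ≤ i0 := by
      have h := Finset.card_le_card_of_injOn
        (s := (Finset.univ.filter (fun i : Fin m => (i : ℕ) < k)).filter
          (fun i : Fin m => (i:ℕ) < i0))
        (f := fun i : Fin m => (i:ℕ))
        (t := Finset.range i0)
        (fun i hi => Finset.mem_range.mpr (Finset.mem_filter.mp hi).2)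
        (fun a _ b _ h => Fin.val_injective h)
      rwa [Finset.card_range] at h
    have heq : ∀ i ∈ (Finset.univ.filter (fun i : Fin m => (i : ℕ) < k)).filter
        (fun i : Fin m => (i:ℕ) < i0), (T i) ^ (-α) = δ ^ (-α) := by
      intro i hi
      rw [Finset.mem_filter] at hi
      rw [hT_def]
      dsimp only
      rw [if_pos hi.2]
    rw [Finset.sum_congr rfl heq, Finset.sum_const, nsmul_eq_mul]
    have hδnn : (0:ℝ) ≤ δ ^ (-α) := (Real.rpow_pos_of_pos hδpos _).le
    calc (_ : ℝ) ≤ (i0:ℝ) * δ ^ (-α) := by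
          apply mul_le_mul_of_nonneg_right _ hδnn
          exact_mod_cast hcard
      _ = A * (m:ℝ)^α * (k:ℝ)^(1-α) := by
          rw [hδpow]; field_simp
  -- second part
  have hsecond : ∑ i ∈ (Finset.univ.filter (fun i : Fin m => (i : ℕ) < k)).filter
        (fun i : Fin m => ¬((i:ℕ) < i0)), (T i) ^ (-α)
      ≤ 6^α * (m:ℝ)^α * ((k:ℝ)^(1-α)/(1-α)) := by
    have hterm : ∀ i : Fin m, ¬((i:ℕ) < i0) →
        (T i) ^ (-α) = (6*(m:ℝ))^α * (((i:ℕ):ℝ)+1) ^ (-α) := by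
      intro i hi
      rw [hT_def]
      dsimp only
      rw [if_neg hi, Real.div_rpow (by positivity) (by positivity),
        Real.rpow_neg (by positivity : (0:ℝ) ≤ 6*(m:ℝ))]
      field_simp
    have hm0 : 0 < m := lt_of_lt_of_le hk hkm
    calc ∑ i ∈ (Finset.univ.filter (fun i : Fin m => (i : ℕ) < k)).filter
          (fun i : Fin m => ¬((i:ℕ) < i0)), (T i) ^ (-α)
        = ∑ i ∈ (Finset.univ.filter (fun i : Fin m => (i : ℕ) < k)).filter
          (fun i : Fin m => ¬((i:ℕ) < i0)), (6*(m:ℝ))^α * (((i:ℕ):ℝ)+1) ^ (-α) :=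
          Finset.sum_congr rfl (fun i hi => hterm i (Finset.mem_filter.mp hi).2)
      _ ≤ ∑ i ∈ Finset.univ.filter (fun i : Fin m => (i : ℕ) < k),
            (6*(m:ℝ))^α * (((i:ℕ):ℝ)+1) ^ (-α) := by
          apply Finset.sum_le_sum_of_subset_of_nonneg (Finset.filter_subset _ _)
          intro i _ _
          positivity
      _ = (6*(m:ℝ))^α * ∑ n ∈ Finset.range k, ((n:ℝ)+1) ^ (-α) := by
          rw [Finset.mul_sum]
          apply Finset.sum_nbij' (i := fun i : Fin m => (i:ℕ))
            (j := fun n : ℕ => (⟨n % m, Nat.mod_lt n hm0⟩ : Fin m))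
          · intro a ha
            exact Finset.mem_range.mpr (Finset.mem_filter.mp ha).2
          · intro n hn
            have hnk : n < k := Finset.mem_range.mp hn
            have : n % m = n := Nat.mod_eq_of_lt (lt_of_lt_of_le hnk hkm)
            simp only [Finset.mem_filter, Finset.mem_univ, true_and, this]
            exact hnk
          · intro a ha
            apply Fin.ext
            exact Nat.mod_eq_of_lt a.isLt
          · intro n hn
            exact Nat.mod_eq_of_lt (lt_of_lt_of_le (Finset.mem_range.mp hn) hkm)
          · intro a _
            rfl
      _ ≤ (6*(m:ℝ))^α * ((k:ℝ)^(1-α)/(1-α)) := by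
          apply mul_le_mul_of_nonneg_left (sum_rpow_neg_le α hα0 hα1 k) (by positivity)
      _ = 6^α * (m:ℝ)^α * ((k:ℝ)^(1-α)/(1-α)) := by
          rw [Real.mul_rpow (by norm_num) hmR.le]
  -- combine
  have hAfinal : A * (m:ℝ)^α * (k:ℝ)^(1-α) + 6^α * (m:ℝ)^α * ((k:ℝ)^(1-α)/(1-α))
      = 2 * 3 ^ α / (1 - α) * (m : ℝ) ^ α * (k : ℝ) ^ (1 - α) := by
    rw [hA_def]; field_simp; ring
  calc ∑ i ∈ Finset.univ.filter (fun i : Fin m => (i : ℕ) < k), (Uord ω i) ^ (-α)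
      ≤ ∑ i ∈ Finset.univ.filter (fun i : Fin m => (i : ℕ) < k), (T i) ^ (-α) := step1
    _ = _ + _ := hsplit.symm
    _ ≤ A * (m:ℝ)^α * (k:ℝ)^(1-α) + 6^α * (m:ℝ)^α * ((k:ℝ)^(1-α)/(1-α)) :=
        add_le_add hfirst hsecond
    _ = _ := hAfinal


lemma aux_i0log (k : ℕ) (hk : 1 ≤ k) :
    ((Nat.clog 2 k + 1 : ℕ):ℝ) ≤ 2*(Real.log k + 2) := by
  have hi0L : ((Nat.clog 2 k + 1 : ℕ):ℝ) ≤ 2*(Real.log k + 2) := by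
    rcases eq_or_lt_of_le hk with h | h
    · rw [← h]
      simp [Nat.clog_one_right]
      norm_num
    · have hk2 : 1 < k := h
      set c := Nat.clog 2 k with hc
      have hcpos : 1 ≤ c := Nat.clog_pos one_lt_two hk2
      have hpow : 2 ^ (c - 1) < k := Nat.pow_pred_clog_lt_self one_lt_two hk2
      have hpowR : (2:ℝ) ^ (c-1) < (k:ℝ) := by exact_mod_cast hpow
      have hlog : ((c-1:ℕ):ℝ) * Real.log 2 ≤ Real.log k := by
        rw [← Real.log_pow]
        exact Real.log_le_log (by positivity) hpowR.le
      have hlog2 : (1/2:ℝ) < Real.log 2 := by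
        linarith [Real.log_two_gt_d9]
      have hcast : ((c-1:ℕ):ℝ) = (c:ℝ) - 1 := by
        rw [Nat.cast_sub hcpos]; norm_num
      have hlogk : 0 ≤ Real.log k := Real.log_nonneg (by exact_mod_cast hk)
      have h1 : ((c:ℝ)-1) ≤ 2 * Real.log k := by
        rw [hcast] at hlog
        nlinarith
      push_cast
      linarith
  exact hi0L

lemma aux_num (α A C : ℝ) (hα0 : 0 < α) (hα1 : α < 1) (hA : 0 < A)
    (hC_def : C = max 1 (max (1/α) ((2/A)^(1/α))))
    (k i0 : ℕ) (hkR1 : (1:ℝ) ≤ k) (hi0R : (0:ℝ) < i0)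
    (hi0L : (i0:ℝ) ≤ 2*(Real.log k + 2)) :
    ((i0:ℝ)/A)^(1/α) * (k:ℝ)^(-((1-α)/α)) + 1/(2*(k:ℝ))
      ≤ C * (Real.log k + 2) ^ C * (1 / (k:ℝ) + 1 / (k : ℝ) ^ ((1 - α) / α)) := by
  have hkR : (0:ℝ) < k := by linarith
  set L : ℝ := Real.log k + 2 with hL
  have hL2 : (2:ℝ) ≤ L := by
    have : 0 ≤ Real.log k := Real.log_nonneg hkR1
    linarith
  have hL1 : (1:ℝ) ≤ L := by linarith
  have hC1 : (1:ℝ) ≤ C := by rw [hC_def]; exact le_max_left _ _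
  have hCα : 1/α ≤ C := by rw [hC_def]; exact le_trans (le_max_left _ _) (le_max_right _ _)
  have hC2A : (2/A)^(1/α) ≤ C := by
    rw [hC_def]; exact le_trans (le_max_right _ _) (le_max_right _ _)
  have hLC1 : (1:ℝ) ≤ L^C := by
    calc (1:ℝ) = L^(0:ℝ) := (Real.rpow_zero L).symm
      _ ≤ L^C := Real.rpow_le_rpow_of_exponent_le hL1 (by linarith)
  have h1 : ((i0:ℝ)/A)^(1/α) ≤ C * L^C := by
    calc ((i0:ℝ)/A)^(1/α) ≤ (2*L/A)^(1/α) := by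
          apply Real.rpow_le_rpow (by positivity) _ (by positivity)
          apply div_le_div_of_nonneg_right hi0L hA.le
      _ = (2/A)^(1/α) * L^(1/α) := by
          rw [show (2*L/A) = (2/A)*L by ring,
            Real.mul_rpow (by positivity) (by linarith)]
      _ ≤ C * L^C := by
          apply mul_le_mul hC2A _ (by positivity) (by linarith)
          exact Real.rpow_le_rpow_of_exponent_le hL1 hCα
  have hβ : 1/(k:ℝ)^((1-α)/α) = (k:ℝ)^(-((1-α)/α)) := by
    rw [Real.rpow_neg hkR.le, one_div]
  have hkβ : (0:ℝ) ≤ (k:ℝ)^(-((1-α)/α)) := (Real.rpow_pos_of_pos hkR _).le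
  have h2 : ((i0:ℝ)/A)^(1/α) * (k:ℝ)^(-((1-α)/α)) ≤ C * L^C * (k:ℝ)^(-((1-α)/α)) :=
    mul_le_mul_of_nonneg_right h1 hkβ
  have h3 : 1/(2*(k:ℝ)) ≤ C * L^C * (1/(k:ℝ)) := by
    have hk1 : (0:ℝ) < 1/(k:ℝ) := by positivity
    have : (1:ℝ) * (1/(k:ℝ)) ≤ C * L^C * (1/(k:ℝ)) := by
      apply mul_le_mul_of_nonneg_right _ hk1.le
      nlinarith
    calc 1/(2*(k:ℝ)) ≤ 1/(k:ℝ) := by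
          rw [div_le_div_iff₀ (by positivity) hkR]
          nlinarith
      _ = 1 * (1/(k:ℝ)) := (one_mul _).symm
      _ ≤ _ := this
  rw [hβ]
  calc ((i0:ℝ)/A)^(1/α) * (k:ℝ)^(-((1-α)/α)) + 1/(2*(k:ℝ))
      ≤ C * L^C * (k:ℝ)^(-((1-α)/α)) + C * L^C * (1/(k:ℝ)) := add_le_add h2 h3
    _ = C * L^C * (1/(k:ℝ) + (k:ℝ)^(-((1-α)/α))) := by ring


lemma aux_geom (k : ℕ) (hk : 1 ≤ k) :
    ∑ n ∈ Finset.Ico (Nat.clog 2 k + 1) k, (1/2:ℝ)^(n+1) ≤ 1/(2*(k:ℝ)) := by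
  set i0 := Nat.clog 2 k + 1 with hi0
  have hkR : (0:ℝ) < k := by exact_mod_cast hk
  have hgeom : ∑ n ∈ Finset.Ico i0 k, (1/2:ℝ)^n ≤ 2 * (1/2:ℝ)^i0 := by
    rcases le_or_gt k i0 with h | h
    · rw [Finset.Ico_eq_empty (by omega)]
      simp only [Finset.sum_empty]
      positivity
    · have := geom_sum_Ico (x := (1/2:ℝ)) (by norm_num) h.le
      rw [this]
      have hp : (0:ℝ) < (1/2:ℝ)^k := by positivity
      rw [div_le_iff_of_neg (by norm_num : (1/2:ℝ) - 1 < 0)]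
      nlinarith
  have hsum : ∑ n ∈ Finset.Ico i0 k, (1/2:ℝ)^(n+1)
      = (1/2) * ∑ n ∈ Finset.Ico i0 k, (1/2:ℝ)^n := by
    rw [Finset.mul_sum]
    apply Finset.sum_congr rfl
    intro n _
    rw [pow_succ]
    ring
  have hpow : (1/2:ℝ)^i0 ≤ 1/(2*k) := by
    have h2 : (k:ℝ) ≤ 2^(Nat.clog 2 k) := by
      exact_mod_cast Nat.le_pow_clog one_lt_two k
    have : (2:ℝ)*k ≤ 2^i0 := by
      rw [hi0, pow_succ]
      nlinarith
    rw [div_pow, one_pow, div_le_div_iff₀ (by positivity) (by positivity)]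
    nlinarith
  rw [hsum]
  nlinarith [hpow, hgeom]


lemma aux_bad {Ω : Type} [MeasurableSpace Ω] (P : Measure Ω) (m k n : ℕ) (hm : 1 ≤ m) (δ : ℝ)
    (hδpos : 0 < δ)
    (U : Fin m → Ω → ℝ)
    (htail : ∀ (t : ℝ), 0 ≤ t → ∀ (n : ℕ),
      P {ω | ∃ S : Finset (Fin m), S.card = n ∧ ∀ j ∈ S, U j ω ≤ t}
        ≤ (m.choose n) * ENNReal.ofReal t ^ n) :
    (P {ω | ∃ S : Finset (Fin m), S.card = 1 ∧ ∀ j ∈ S, U j ω ≤ δ} ≤ ENNReal.ofReal ((m:ℝ) * δ))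
    ∧ (P {ω | ∃ S : Finset (Fin m), S.card = n+1 ∧ ∀ j ∈ S, U j ω ≤ ((n:ℝ)+1)/(6*m)}
        ≤ ENNReal.ofReal ((1/2:ℝ)^(n+1))) := by
  have hmR : (0:ℝ) < m := by exact_mod_cast hm
  constructor
  · calc P _ ≤ (m.choose 1) * ENNReal.ofReal δ ^ 1 := htail δ hδpos.le 1
      _ = ENNReal.ofReal ((m:ℝ) * δ) := by
        rw [Nat.choose_one_right, pow_one, ENNReal.ofReal_mul (by positivity),
          ENNReal.ofReal_natCast]
  · have ht : (0:ℝ) ≤ ((n:ℝ)+1)/(6*m) := by positivity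
    calc P _ ≤ (m.choose (n+1)) * ENNReal.ofReal (((n:ℝ)+1)/(6*m)) ^ (n+1) :=
          htail _ ht (n+1)
      _ = ENNReal.ofReal ((m.choose (n+1) : ℝ) * (((n:ℝ)+1)/(6*m)) ^ (n+1)) := by
          rw [ENNReal.ofReal_mul (by positivity), ENNReal.ofReal_pow ht,
            ENNReal.ofReal_natCast]
      _ ≤ ENNReal.ofReal ((1/2:ℝ)^(n+1)) := by
          apply ENNReal.ofReal_le_ofReal
          have := choose_mul_pow_le m (n+1) hm
          push_cast at this ⊢
          convert this using 3


lemma aux_delta (α A i0 k m : ℝ) (hα0 : 0 < α) (hα1 : α < 1) (hA : 0 < A)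
    (hi0R : 0 < i0) (hkR : 0 < k) (hmR : 0 < m) :
    ((i0/A)^(1/α) * k^(-((1-α)/α)) / m)^(-α) = (A/i0) * m^α * k^(1-α) := by
  have hx : ((i0/A)^(1/α))^(-α) = A/i0 := by
    rw [← Real.rpow_mul (le_of_lt (div_pos hi0R hA))]
    have h : (1/α)*(-α) = -1 := by field_simp
    rw [h, Real.rpow_neg_one, inv_div]
  have hy : (k^(-((1-α)/α)))^(-α) = k^(1-α) := by
    rw [← Real.rpow_mul hkR.le]
    have h : -((1 - α) / α) * -α = 1 - α := by field_simp
    rw [h]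
  have hm : m^(-α) = (m^α)⁻¹ := Real.rpow_neg hmR.le α
  rw [Real.div_rpow (by positivity) hmR.le, Real.mul_rpow (by positivity) (by positivity),
    hx, hy, hm]
  field_simp

/-- High-probability bound on `∑_{i=1}^k U_{(i)}^{-α}` for uniform order statistics,
with failure probability `Õ(1/k + 1/k^{(1-α)/α})`. -/
theorem uniform_order_statistics_inverse_power_sum (α : ℝ) (hα0 : 0 < α) (hα1 : α < 1) :
    ∃ C : ℝ, 0 < C ∧
      ∀ (Ω : Type) (_ : MeasurableSpace Ω) (P : Measure Ω), IsProbabilityMeasure P →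
        ∀ (m k : ℕ), 1 ≤ k → k ≤ m →
          ∀ (U : Fin m → Ω → ℝ),
            iIndepFun U P →
            (∀ i, Measure.map (U i) P = volume.restrict (Set.Icc (0:ℝ) 1)) →
            ∀ (Uord : Ω → Fin m → ℝ),
              (∀ ω, Monotone (Uord ω)) →
              (∀ ω, ∃ σ : Equiv.Perm (Fin m), ∀ i, Uord ω i = U (σ i) ω) →
              P {ω | ∑ i ∈ Finset.univ.filter (fun i : Fin m => (i : ℕ) < k),
                    (Uord ω i) ^ (-α)
                  ≤ 2 * 3 ^ α / (1 - α) * (m : ℝ) ^ α * (k : ℝ) ^ (1 - α)}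
                ≥ 1 - ENNReal.ofReal
                    (C * (Real.log k + 2) ^ C * (1 / k + 1 / (k : ℝ) ^ ((1 - α) / α))) := by
  have h1α : (0:ℝ) < 1 - α := by linarith
  set A : ℝ := (2 * 3^α - 6^α) / (1-α) with hA_def
  have h2α : (2:ℝ)^α < 2 := by
    calc (2:ℝ)^α < 2^(1:ℝ) := Real.rpow_lt_rpow_of_exponent_lt one_lt_two hα1
      _ = 2 := Real.rpow_one 2
  have h6α : (6:ℝ)^α = 2^α * 3^α := by
    rw [show (6:ℝ) = 2*3 by norm_num, Real.mul_rpow (by norm_num) (by norm_num)]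
  have hA : 0 < A := by
    apply div_pos _ h1α
    have h3 : (0:ℝ) < 3^α := Real.rpow_pos_of_pos (by norm_num) _
    rw [h6α]; nlinarith
  refine ⟨max 1 (max (1/α) ((2/A)^(1/α))), lt_max_of_lt_left one_pos, ?_⟩
  set C : ℝ := max 1 (max (1/α) ((2/A)^(1/α))) with hC_def
  intro Ω inst P hP m k hk hkm U hind hmap Uord hmono hperm
  have hm1 : 1 ≤ m := le_trans hk hkm
  have hm0 : 0 < m := hm1
  have hmR : (0:ℝ) < m := by exact_mod_cast hm0
  have hkR : (0:ℝ) < k := by exact_mod_cast hk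
  have hkR1 : (1:ℝ) ≤ k := by exact_mod_cast hk
  set i0 : ℕ := Nat.clog 2 k + 1 with hi0_def
  have hi0pos : 0 < i0 := Nat.succ_pos _
  have hi0R : (0:ℝ) < i0 := by exact_mod_cast hi0pos
  set δ : ℝ := ((i0:ℝ)/A)^(1/α) * (k:ℝ)^(-((1-α)/α)) / m with hδ_def
  have hδpos : 0 < δ := by
    apply div_pos _ hmR
    apply mul_pos (Real.rpow_pos_of_pos (div_pos hi0R hA) _) (Real.rpow_pos_of_pos hkR _)
  -- δ^(-α) = (A/i0) * m^α * k^(1-α)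
  have hδpow : δ^(-α) = (A/(i0:ℝ)) * (m:ℝ)^α * (k:ℝ)^(1-α) := by
    rw [hδ_def]
    exact aux_delta α A i0 k m hα0 hα1 hA hi0R hkR hmR
  -- m * δ = (i0/A)^(1/α) * k^(-(1-α)/α)
  have hmδ : (m:ℝ) * δ = ((i0:ℝ)/A)^(1/α) * (k:ℝ)^(-((1-α)/α)) := by
    rw [hδ_def]; field_simp
  -- threshold function
  set T : Fin m → ℝ := fun i => if (i:ℕ) < i0 then δ else ((i:ℕ)+1)/(6*m) with hT_def
  have hTpos : ∀ i : Fin m, 0 < T i := by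
    intro i
    rw [hT_def]
    dsimp only
    split
    · exact hδpos
    · positivity
  set G : Set Ω := {ω | ∀ i : Fin m, (i:ℕ) < k → T i ≤ Uord ω i} with hG_def
  -- Step 1: on G the sum bound holds
  have hGsub : G ⊆ {ω | ∑ i ∈ Finset.univ.filter (fun i : Fin m => (i : ℕ) < k),
                    (Uord ω i) ^ (-α)
                  ≤ 2 * 3 ^ α / (1 - α) * (m : ℝ) ^ α * (k : ℝ) ^ (1 - α)} := by
    intro ω hω
    exact aux_gsub α hα0 hα1 m k i0 hk hkm hi0pos δ A hA_def hδpos hδpow Uord ω hω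
  -- Step 2: complement of G is contained in bad events
  set Bad : ℕ → Set Ω := fun n =>
    {ω | ∃ S : Finset (Fin m), S.card = n+1 ∧ ∀ j ∈ S, U j ω ≤ ((n:ℝ)+1)/(6*m)} with hBad_def
  set Bad0 : Set Ω := {ω | ∃ S : Finset (Fin m), S.card = 1 ∧ ∀ j ∈ S, U j ω ≤ δ} with hBad0_def
  have hGc : Gᶜ ⊆ Bad0 ∪ ⋃ n ∈ Finset.Ico i0 k, Bad n := by
    intro ω hω
    exact aux_gc m k i0 hk hkm δ U Uord hmono hperm hω
  -- Step 3: probability bounds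
  have htail := fun (t : ℝ) (ht : 0 ≤ t) (n : ℕ) => uniform_tail_bound P U hind hmap t ht n
  have hPBad0 : P Bad0 ≤ ENNReal.ofReal ((m:ℝ) * δ) :=
    (aux_bad P m k 0 hm1 δ hδpos U htail).1
  have hPBad : ∀ n ∈ Finset.Ico i0 k, P (Bad n) ≤ ENNReal.ofReal ((1/2:ℝ)^(n+1)) := by
    intro n _
    exact (aux_bad P m k n hm1 δ hδpos U htail).2
  have hsum_geom : ∑ n ∈ Finset.Ico i0 k, (1/2:ℝ)^(n+1) ≤ 1/(2*k) :=
    aux_geom k hk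
  have hPGc : P Gᶜ ≤ ENNReal.ofReal ((m:ℝ)*δ + 1/(2*k)) := by
    calc P Gᶜ ≤ P (Bad0 ∪ ⋃ n ∈ Finset.Ico i0 k, Bad n) := measure_mono hGc
      _ ≤ P Bad0 + P (⋃ n ∈ Finset.Ico i0 k, Bad n) := measure_union_le _ _
      _ ≤ ENNReal.ofReal ((m:ℝ)*δ) + ∑ n ∈ Finset.Ico i0 k, P (Bad n) := by
          exact add_le_add hPBad0 (measure_biUnion_finset_le _ _)
      _ ≤ ENNReal.ofReal ((m:ℝ)*δ) + ∑ n ∈ Finset.Ico i0 k, ENNReal.ofReal ((1/2:ℝ)^(n+1)) :=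
          add_le_add le_rfl (Finset.sum_le_sum hPBad)
      _ ≤ ENNReal.ofReal ((m:ℝ)*δ) + ENNReal.ofReal (1/(2*k)) := by
          apply add_le_add le_rfl
          rw [← ENNReal.ofReal_sum_of_nonneg (fun n _ => by positivity)]
          exact ENNReal.ofReal_le_ofReal hsum_geom
      _ = ENNReal.ofReal ((m:ℝ)*δ + 1/(2*k)) := by
          rw [← ENNReal.ofReal_add (by positivity) (by positivity)]
  -- Step 4: numeric comparison
  have hnum : (m:ℝ)*δ + 1/(2*k) ≤ C * (Real.log k + 2) ^ C * (1 / k + 1 / (k : ℝ) ^ ((1 - α) / α)) := by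
    rw [hmδ]
    exact aux_num α A C hα0 hα1 hA hC_def k i0 hkR1 hi0R (aux_i0log k hk)
  -- conclude
  have hchain : 1 - ENNReal.ofReal
      (C * (Real.log k + 2) ^ C * (1 / k + 1 / (k : ℝ) ^ ((1 - α) / α))) ≤ P G := by
    have h1 : (1:ENNReal) ≤ P G + P Gᶜ := by
      have := measure_union_le (μ := P) G Gᶜ
      rw [Set.union_compl_self] at this
      simpa using this
    have h2 : P Gᶜ ≤ ENNReal.ofReal
        (C * (Real.log k + 2) ^ C * (1 / k + 1 / (k : ℝ) ^ ((1 - α) / α))) :=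
      le_trans hPGc (ENNReal.ofReal_le_ofReal hnum)
    calc 1 - ENNReal.ofReal (C * (Real.log k + 2) ^ C * (1 / k + 1 / (k : ℝ) ^ ((1 - α) / α)))
        ≤ 1 - P Gᶜ := tsub_le_tsub_left h2 1
      _ ≤ P G := by
          rw [tsub_le_iff_right]
          exact h1
  exact le_trans hchain (measure_mono hGsub)
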